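/- arXiv:2202.04628 — 3 statements merged into one kernel-verified Lean document; each statement's English description precedes it below -/
import Mathlib

section
/- Performance Difference Lemma: For any two policies π and π̃ of the fixed finite discounted MDP, J_R(π) − J_R(π̃) = (1−γ)^{-1} ∑_s d^π(s) ∑_a π(s,a) A_R^{π̃}(s,a). -/
open Finset

/-- Time-`t` state distribution of policy `π` in the MDP with transitions `P`
and initial distribution `μ`. -/
noncomputable def pDist {S A : Type*} [Fintype S] [Fintype A]
    (P : S → A → S → ℝ) (μ : S → ℝ) (π : S → A → ℝ) : ℕ → S → ℝ
  | 0 => μ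
  | t + 1 => fun s' => ∑ s, ∑ a, pDist P μ π t s * π s a * P s a s'

/-- Discounted state visitation distribution `d^π`. -/
noncomputable def dvisit {S A : Type*} [Fintype S] [Fintype A]
    (P : S → A → S → ℝ) (μ : S → ℝ) (γ : ℝ) (π : S → A → ℝ) (s : S) : ℝ :=
  (1 - γ) * ∑' t : ℕ, γ ^ t * pDist P μ π t s

/-- Discounted return `J_R(π)`. -/
noncomputable def Jret {S A : Type*} [Fintype S] [Fintype A]
    (P : S → A → S → ℝ) (μ : S → ℝ) (γ : ℝ) (R : S → A → ℝ) (π : S → A → ℝ) : ℝ :=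
  ∑' t : ℕ, γ ^ t * ∑ s, ∑ a, pDist P μ π t s * π s a * R s a

/-- Advantage function `A_R^π(s,a) = Q_R^π(s,a) - V_R^π(s)`, expressed in terms of
the value function `V` of the policy. -/
noncomputable def Adv {S A : Type*} [Fintype S]
    (P : S → A → S → ℝ) (γ : ℝ) (R : S → A → ℝ) (V : S → ℝ) (s : S) (a : A) : ℝ :=
  (R s a + γ * ∑ s', P s a s' * V s') - V s

/-- KL divergence between two distributions on a finite type. -/
noncomputable def KL {X : Type*} [Fintype X] (p q : X → ℝ) : ℝ :=
  ∑ x, p x * Real.log (p x / q x)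

/-- Total variation distance between two distributions on a finite type. -/
noncomputable def TV {X : Type*} [Fintype X] (p q : X → ℝ) : ℝ :=
  (1 / 2) * ∑ x, |p x - q x|


section helpers
variable {S A : Type*} [Fintype S] [Fintype A]

lemma pDist_nonneg (P : S → A → S → ℝ) (μ : S → ℝ) (π : S → A → ℝ)
    (hP0 : ∀ s a s', 0 ≤ P s a s') (hμ0 : ∀ s, 0 ≤ μ s) (hπ0 : ∀ s a, 0 ≤ π s a) :
    ∀ t s, 0 ≤ pDist P μ π t s := by
  intro t
  induction t with
  | zero => exact hμ0
  | succ t ih =>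
    intro s'
    exact Finset.sum_nonneg fun s _ => Finset.sum_nonneg fun a _ =>
      mul_nonneg (mul_nonneg (ih s) (hπ0 s a)) (hP0 s a s')

lemma pDist_sum (P : S → A → S → ℝ) (μ : S → ℝ) (π : S → A → ℝ)
    (hP1 : ∀ s a, ∑ s', P s a s' = 1) (hμ1 : ∑ s, μ s = 1) (hπ1 : ∀ s, ∑ a, π s a = 1) :
    ∀ t, ∑ s, pDist P μ π t s = 1 := by
  intro t
  induction t with
  | zero => exact hμ1
  | succ t ih =>
    show ∑ s', ∑ s, ∑ a, pDist P μ π t s * π s a * P s a s' = 1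
    rw [Finset.sum_comm]
    calc ∑ s, ∑ s', ∑ a, pDist P μ π t s * π s a * P s a s'
        = ∑ s, ∑ a, ∑ s', pDist P μ π t s * π s a * P s a s' := by
          refine Finset.sum_congr rfl fun s _ => ?_
          rw [Finset.sum_comm]
      _ = ∑ s, pDist P μ π t s := by
          refine Finset.sum_congr rfl fun s _ => ?_
          simp only [← Finset.mul_sum, hP1, mul_one, hπ1]
      _ = 1 := ih

/-- One-step propagation of expectations of a function. -/
lemma pDist_step (P : S → A → S → ℝ) (μ : S → ℝ) (π : S → A → ℝ) (V : S → ℝ) (t : ℕ) :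
    ∑ s, pDist P μ π (t + 1) s * V s
      = ∑ s, ∑ a, pDist P μ π t s * π s a * ∑ s', P s a s' * V s' := by
  show ∑ s', (∑ s, ∑ a, pDist P μ π t s * π s a * P s a s') * V s' = _
  simp only [Finset.sum_mul, Finset.mul_sum]
  rw [Finset.sum_comm]
  refine Finset.sum_congr rfl fun s _ => ?_
  rw [Finset.sum_comm]
  exact Finset.sum_congr rfl fun a _ => Finset.sum_congr rfl fun s' _ => by ring

lemma bound_one (p : S → ℝ) (hp0 : ∀ s, 0 ≤ p s) (hp1 : ∑ s, p s = 1) (c : S → ℝ) :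
    |∑ s, p s * c s| ≤ ∑ s, |c s| := by
  calc |∑ s, p s * c s| ≤ ∑ s, |p s * c s| := Finset.abs_sum_le_sum_abs _ _
    _ ≤ ∑ s, |c s| := by
        refine Finset.sum_le_sum fun s _ => ?_
        rw [abs_mul, abs_of_nonneg (hp0 s)]
        have hps : p s ≤ 1 := hp1 ▸ Finset.single_le_sum (fun i _ => hp0 i) (Finset.mem_univ s)
        nlinarith [abs_nonneg (c s)]

lemma summable_geom_bound (γ : ℝ) (hγ0 : 0 ≤ γ) (hγ1 : γ < 1) (c : ℕ → ℝ) (C : ℝ)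
    (hc : ∀ t, |c t| ≤ C) : Summable (fun t => γ ^ t * c t) := by
  refine Summable.of_norm_bounded (g := fun t => γ ^ t * C)
    ((summable_geometric_of_lt_one hγ0 hγ1).mul_right C) fun t => ?_
  rw [Real.norm_eq_abs, abs_mul, abs_pow, abs_of_nonneg hγ0]
  exact mul_le_mul_of_nonneg_left (hc t) (pow_nonneg hγ0 t)

end helpers

/-- **Performance Difference Lemma.** For any two policies `π` and `π̃` of a finite
discounted MDP, `J_R(π) − J_R(π̃) = (1−γ)⁻¹ ∑_s d^π(s) ∑_a π(s,a) A_R^{π̃}(s,a)`. -/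
theorem stmt_0 {S A : Type*} [Fintype S] [Fintype A] [Nonempty S] [Nonempty A]
    (R : S → A → ℝ) (P : S → A → S → ℝ)
    (hP0 : ∀ s a s', 0 ≤ P s a s') (hP1 : ∀ s a, ∑ s', P s a s' = 1)
    (γ : ℝ) (hγ0 : 0 < γ) (hγ1 : γ < 1)
    (μ : S → ℝ) (hμ0 : ∀ s, 0 ≤ μ s) (hμ1 : ∑ s, μ s = 1)
    (π πt : S → A → ℝ)
    (hπ0 : ∀ s a, 0 ≤ π s a) (hπ1 : ∀ s, ∑ a, π s a = 1)
    (hπt0 : ∀ s a, 0 ≤ πt s a) (hπt1 : ∀ s, ∑ a, πt s a = 1)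
    (Vt : S → ℝ)
    (hVt : ∀ s, Vt s = ∑ a, πt s a * (R s a + γ * ∑ s', P s a s' * Vt s')) :
    Jret P μ γ R π - Jret P μ γ R πt =
      (1 - γ)⁻¹ * ∑ s, dvisit P μ γ π s * ∑ a, π s a * Adv P γ R Vt s a := by
  have hq0 : ∀ t s, 0 ≤ pDist P μ π t s := pDist_nonneg P μ π hP0 hμ0 hπ0
  have hq1 : ∀ t, ∑ s, pDist P μ π t s = 1 := pDist_sum P μ π hP1 hμ1 hπ1
  have hqt0 : ∀ t s, 0 ≤ pDist P μ πt t s := pDist_nonneg P μ πt hP0 hμ0 hπt0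
  have hqt1 : ∀ t, ∑ s, pDist P μ πt t s = 1 := pDist_sum P μ πt hP1 hμ1 hπt1
  set W : S → ℝ := fun s => ∑ a, π s a * Adv P γ R Vt s a with hW
  set f : ℕ → ℝ := fun t => γ ^ t * ∑ s, ∑ a, pDist P μ π t s * π s a * R s a with hf
  set g : ℕ → ℝ := fun t => γ ^ t * ∑ s, ∑ a, pDist P μ πt t s * πt s a * R s a with hg
  set Sv : ℕ → ℝ := fun t => γ ^ t * ∑ s, pDist P μ π t s * Vt s with hSv
  set Tv : ℕ → ℝ := fun t => γ ^ t * ∑ s, pDist P μ πt t s * Vt s with hTv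
  set h : ℕ → ℝ := fun t => γ ^ t * ∑ s, pDist P μ π t s * W s with hh
  -- summabilities
  have hfS : Summable f := by
    refine summable_geom_bound γ hγ0.le hγ1 _ (∑ s, |∑ a, π s a * R s a|) fun t => ?_
    have e : ∀ s, ∑ a, pDist P μ π t s * π s a * R s a
        = pDist P μ π t s * ∑ a, π s a * R s a := by
      intro s; rw [Finset.mul_sum]; exact Finset.sum_congr rfl fun a _ => by ring
    simp only [e]
    exact bound_one _ (hq0 t) (hq1 t) _
  have hgS : Summable g := by
    refine summable_geom_bound γ hγ0.le hγ1 _ (∑ s, |∑ a, πt s a * R s a|) fun t => ?_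
    have e : ∀ s, ∑ a, pDist P μ πt t s * πt s a * R s a
        = pDist P μ πt t s * ∑ a, πt s a * R s a := by
      intro s; rw [Finset.mul_sum]; exact Finset.sum_congr rfl fun a _ => by ring
    simp only [e]
    exact bound_one _ (hqt0 t) (hqt1 t) _
  have hSvS : Summable Sv :=
    summable_geom_bound γ hγ0.le hγ1 _ (∑ s, |Vt s|) fun t => bound_one _ (hq0 t) (hq1 t) _
  have hTvS : Summable Tv :=
    summable_geom_bound γ hγ0.le hγ1 _ (∑ s, |Vt s|) fun t => bound_one _ (hqt0 t) (hqt1 t) _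
  have hhS : Summable h :=
    summable_geom_bound γ hγ0.le hγ1 _ (∑ s, |W s|) fun t => bound_one _ (hq0 t) (hq1 t) _
  have hSv_succ : Summable (fun t => Sv (t + 1)) := (summable_nat_add_iff 1).mpr hSvS
  have hTv_succ : Summable (fun t => Tv (t + 1)) := (summable_nat_add_iff 1).mpr hTvS
  -- value recursion aggregated (policy πt)
  have key : ∀ t, ∑ s, pDist P μ πt t s * Vt s
      = (∑ s, ∑ a, pDist P μ πt t s * πt s a * R s a)
        + γ * ∑ s, pDist P μ πt (t + 1) s * Vt s := by
    intro t
    have e1 : ∀ s, pDist P μ πt t s * Vt s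
        = (∑ a, pDist P μ πt t s * πt s a * R s a)
          + γ * ∑ a, pDist P μ πt t s * πt s a * ∑ s', P s a s' * Vt s' := by
      intro s
      rw [hVt s, Finset.mul_sum, Finset.mul_sum, ← Finset.sum_add_distrib]
      exact Finset.sum_congr rfl fun a _ => by ring
    rw [pDist_step]
    simp only [e1, Finset.sum_add_distrib, ← Finset.mul_sum]
  have hTv_rec : ∀ t, Tv t - Tv (t + 1) = g t := by
    intro t
    simp only [hTv, hg]
    rw [key t, pow_succ]
    ring
  -- advantage aggregation (policy π)
  have keyA : ∀ t, ∑ s, pDist P μ π t s * W s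
      = (∑ s, ∑ a, pDist P μ π t s * π s a * R s a)
        + γ * (∑ s, pDist P μ π (t + 1) s * Vt s) - ∑ s, pDist P μ π t s * Vt s := by
    intro t
    have e2 : ∀ s, pDist P μ π t s * W s
        = (∑ a, pDist P μ π t s * π s a * R s a)
          + γ * (∑ a, pDist P μ π t s * π s a * ∑ s', P s a s' * Vt s')
          - pDist P μ π t s * Vt s := by
      intro s
      have h3 : ∑ a, pDist P μ π t s * π s a * Vt s = pDist P μ π t s * Vt s := by
        rw [← Finset.sum_mul, ← Finset.mul_sum, hπ1 s, mul_one]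
      have e4 : ∀ a, pDist P μ π t s * (π s a * Adv P γ R Vt s a)
          = pDist P μ π t s * π s a * R s a
            + γ * (pDist P μ π t s * π s a * ∑ s', P s a s' * Vt s')
            - pDist P μ π t s * π s a * Vt s := by
        intro a; simp only [Adv]; ring
      rw [hW, Finset.mul_sum]
      simp only [e4]
      rw [Finset.sum_sub_distrib, Finset.sum_add_distrib, ← Finset.mul_sum, h3]
    rw [pDist_step]
    simp only [e2, Finset.sum_sub_distrib, Finset.sum_add_distrib, ← Finset.mul_sum]
  have hh_rec : ∀ t, h t = f t + (Sv (t + 1) - Sv t) := by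
    intro t
    simp only [hh, hf, hSv]
    rw [keyA t, pow_succ]
    ring
  -- J(πt) = Tv 0
  have hJt : Jret P μ γ R πt = Tv 0 := by
    calc Jret P μ γ R πt = ∑' t, (Tv t - Tv (t + 1)) := tsum_congr fun t => (hTv_rec t).symm
      _ = (∑' t, Tv t) - ∑' t, Tv (t + 1) := Summable.tsum_sub hTvS hTv_succ
      _ = Tv 0 := by rw [Summable.tsum_eq_zero_add hTvS]; ring
  have hJπ : Jret P μ γ R π = ∑' t, f t := rfl
  have hH : ∑' t, h t = (∑' t, f t) - Sv 0 := by
    calc ∑' t, h t = ∑' t, (f t + (Sv (t + 1) - Sv t)) := tsum_congr hh_rec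
      _ = (∑' t, f t) + ((∑' t, Sv (t + 1)) - ∑' t, Sv t) := by
          rw [Summable.tsum_add hfS (hSv_succ.sub hSvS), Summable.tsum_sub hSv_succ hSvS]
      _ = (∑' t, f t) - Sv 0 := by rw [Summable.tsum_eq_zero_add hSvS]; ring
  -- RHS rewriting
  have hdvW : ∀ s, Summable (fun t => γ ^ t * pDist P μ π t s * W s) := by
    intro s
    refine Summable.mul_right _ ?_
    refine summable_geom_bound γ hγ0.le hγ1 _ 1 fun t => ?_
    rw [abs_of_nonneg (hq0 t s)]
    exact (hq1 t) ▸ Finset.single_le_sum (fun i _ => hq0 t i) (Finset.mem_univ s)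
  have hRHS : ∑ s, dvisit P μ γ π s * W s = (1 - γ) * ∑' t, h t := by
    calc ∑ s, dvisit P μ γ π s * W s
        = ∑ s, (1 - γ) * ∑' t, γ ^ t * pDist P μ π t s * W s := by
          refine Finset.sum_congr rfl fun s _ => ?_
          rw [dvisit, mul_assoc, ← tsum_mul_right]
      _ = (1 - γ) * ∑ s, ∑' t, γ ^ t * pDist P μ π t s * W s := by rw [Finset.mul_sum]
      _ = (1 - γ) * ∑' t, ∑ s, γ ^ t * pDist P μ π t s * W s := by
          rw [← Summable.tsum_finsetSum (fun s _ => hdvW s)]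
      _ = (1 - γ) * ∑' t, h t := by
          congr 1
          refine tsum_congr fun t => ?_
          simp only [hh, Finset.mul_sum]
          exact Finset.sum_congr rfl fun s _ => by ring
  have hST : Sv 0 = Tv 0 := by simp [hSv, hTv, pDist]
  have hγne : (1 : ℝ) - γ ≠ 0 := by linarith
  rw [hJπ, hJt, hRHS, hH, hST, inv_mul_cancel_left₀ hγne]
end

section
/- (Performance difference lemma for policy-dependent reward) Let π_b be a behavior policy of the fixed finite discounted MDP with π_b(s,a) > 0 for all (s,a). For any two policies π and π̃ with π(s,a) > 0 and π̃(s,a) > 0 for all (s,a), J_{C_π}(π) − J_{C_{π̃}}(π̃) = (1−γ)^{-1} ∑_s d^π(s) ∑_a π(s,a) A^{π̃}_{C_{π̃}}(s,a) + (1−γ)^{-1} D^π_KL(π, π̃). -/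
open Finset

section aux

variable {S A : Type*} [Fintype S] [Fintype A]

lemma abs_le_sum_abs' (f : S → ℝ) (s : S) : |f s| ≤ ∑ s', |f s'| :=
  Finset.single_le_sum (f := fun s' => |f s'|) (fun s' _ => abs_nonneg _) (Finset.mem_univ s)

lemma pdist_nonneg {P : S → A → S → ℝ} (hP0 : ∀ s a s', 0 ≤ P s a s')
    {μ : S → ℝ} (hμ0 : ∀ s, 0 ≤ μ s) {ρ : S → A → ℝ} (hρ0 : ∀ s a, 0 ≤ ρ s a) :
    ∀ t s, 0 ≤ pDist P μ ρ t s := by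
  intro t
  induction t with
  | zero => exact hμ0
  | succ t ih =>
    intro s'
    exact Finset.sum_nonneg fun s _ => Finset.sum_nonneg fun a _ =>
      mul_nonneg (mul_nonneg (ih s) (hρ0 s a)) (hP0 s a s')

lemma pdist_sum {P : S → A → S → ℝ} (hP1 : ∀ s a, ∑ s', P s a s' = 1)
    {μ : S → ℝ} (hμ1 : ∑ s, μ s = 1) {ρ : S → A → ℝ} (hρ1 : ∀ s, ∑ a, ρ s a = 1) :
    ∀ t, ∑ s, pDist P μ ρ t s = 1 := by
  intro t
  induction t with
  | zero => exact hμ1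
  | succ t ih =>
    show ∑ s', ∑ s, ∑ a, pDist P μ ρ t s * ρ s a * P s a s' = 1
    rw [Finset.sum_comm]
    have h : ∀ s, ∑ s', ∑ a, pDist P μ ρ t s * ρ s a * P s a s' = pDist P μ ρ t s := by
      intro s
      rw [Finset.sum_comm]
      calc ∑ a, ∑ s', pDist P μ ρ t s * ρ s a * P s a s'
          = ∑ a, pDist P μ ρ t s * ρ s a := by
            refine Finset.sum_congr rfl fun a _ => ?_
            rw [← Finset.mul_sum, hP1, mul_one]
        _ = pDist P μ ρ t s := by rw [← Finset.mul_sum, hρ1, mul_one]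
    simp_rw [h]; exact ih

lemma pdist_bound {P : S → A → S → ℝ} (hP0 : ∀ s a s', 0 ≤ P s a s')
    (hP1 : ∀ s a, ∑ s', P s a s' = 1)
    {μ : S → ℝ} (hμ0 : ∀ s, 0 ≤ μ s) (hμ1 : ∑ s, μ s = 1)
    {ρ : S → A → ℝ} (hρ0 : ∀ s a, 0 ≤ ρ s a) (hρ1 : ∀ s, ∑ a, ρ s a = 1)
    (f : S → ℝ) {M : ℝ} (hf : ∀ s, |f s| ≤ M) (t : ℕ) :
    |∑ s, pDist P μ ρ t s * f s| ≤ M := by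
  calc |∑ s, pDist P μ ρ t s * f s| ≤ ∑ s, |pDist P μ ρ t s * f s| :=
        Finset.abs_sum_le_sum_abs _ _
    _ ≤ ∑ s, pDist P μ ρ t s * M := by
        refine Finset.sum_le_sum fun s _ => ?_
        rw [abs_mul, abs_of_nonneg (pdist_nonneg hP0 hμ0 hρ0 t s)]
        exact mul_le_mul_of_nonneg_left (hf s) (pdist_nonneg hP0 hμ0 hρ0 t s)
    _ = M := by rw [← Finset.sum_mul, pdist_sum hP1 hμ1 hρ1, one_mul]

lemma summable_geom_bdd {γ : ℝ} (hγ0 : 0 ≤ γ) (hγ1 : γ < 1) {b : ℕ → ℝ} {M : ℝ}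
    (hb : ∀ t, |b t| ≤ M) : Summable (fun t => γ ^ t * b t) := by
  apply Summable.of_abs
  refine Summable.of_nonneg_of_le (fun t => abs_nonneg _) (fun t => ?_)
    ((summable_geometric_of_lt_one hγ0 hγ1).mul_left M)
  rw [abs_mul, abs_pow, abs_of_nonneg hγ0]
  calc γ ^ t * |b t| ≤ γ ^ t * M :=
        mul_le_mul_of_nonneg_left (hb t) (pow_nonneg hγ0 t)
    _ = M * γ ^ t := mul_comm _ _

lemma tsum_shift_sub (w : ℕ → ℝ) (hw : Summable w) :
    ∑' t : ℕ, (w (t + 1) - w t) = -w 0 := by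
  have h1 : Summable (fun t => w (t + 1)) := (summable_nat_add_iff 1).2 hw
  rw [Summable.tsum_sub h1 hw, Summable.tsum_eq_zero_add hw]
  ring

lemma sum_mul_adv {P : S → A → S → ℝ} {γ : ℝ} {ρ : S → A → ℝ}
    (hρ1 : ∀ s, ∑ a, ρ s a = 1) (R : S → A → ℝ) (V : S → ℝ) (s : S) :
    ∑ a, ρ s a * ((R s a + γ * ∑ s', P s a s' * V s') - V s)
      = (∑ a, ρ s a * R s a) + γ * (∑ a, ρ s a * ∑ s', P s a s' * V s') - V s := by
  have h : ∀ a, ρ s a * ((R s a + γ * ∑ s', P s a s' * V s') - V s)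
      = ρ s a * R s a + γ * (ρ s a * ∑ s', P s a s' * V s') - ρ s a * V s := fun a => by ring
  simp_rw [h, Finset.sum_sub_distrib, Finset.sum_add_distrib, ← Finset.mul_sum,
    ← Finset.sum_mul, hρ1, one_mul]

lemma mid_eq {P : S → A → S → ℝ} {μ : S → ℝ} {ρ : S → A → ℝ} (t : ℕ) (V : S → ℝ) :
    ∑ s, pDist P μ ρ t s * ∑ a, ρ s a * ∑ s', P s a s' * V s'
      = ∑ s', pDist P μ ρ (t + 1) s' * V s' := by
  have hp : ∀ s', pDist P μ ρ (t + 1) s'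
      = ∑ s, ∑ a, pDist P μ ρ t s * ρ s a * P s a s' := fun s' => rfl
  simp_rw [hp, Finset.mul_sum, Finset.sum_mul]
  conv_rhs => rw [Finset.sum_comm]
  refine Finset.sum_congr rfl fun s _ => ?_
  conv_rhs => rw [Finset.sum_comm]
  exact Finset.sum_congr rfl fun a _ => Finset.sum_congr rfl fun s' _ => by ring

end aux

section aux2
variable {S A : Type*} [Fintype S] [Fintype A]

lemma adv_tsum {P : S → A → S → ℝ} (hP0 : ∀ s a s', 0 ≤ P s a s')
    (hP1 : ∀ s a, ∑ s', P s a s' = 1)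
    {γ : ℝ} (hγ0 : 0 ≤ γ) (hγ1 : γ < 1)
    {μ : S → ℝ} (hμ0 : ∀ s, 0 ≤ μ s) (hμ1 : ∑ s, μ s = 1)
    {ρ : S → A → ℝ} (hρ0 : ∀ s a, 0 ≤ ρ s a) (hρ1 : ∀ s, ∑ a, ρ s a = 1)
    (R : S → A → ℝ) (V : S → ℝ) :
    ∑' t : ℕ, γ ^ t * ∑ s, pDist P μ ρ t s * ∑ a, ρ s a * Adv P γ R V s a
      = Jret P μ γ R ρ - ∑ s, μ s * V s := by
  set f : S → ℝ := fun s => ∑ a, ρ s a * R s a with hf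
  set w : ℕ → ℝ := fun t => γ ^ t * ∑ s, pDist P μ ρ t s * V s with hwdef
  have hsumr : Summable (fun t => γ ^ t * ∑ s, pDist P μ ρ t s * f s) :=
    summable_geom_bdd hγ0 hγ1
      (fun t => pdist_bound hP0 hP1 hμ0 hμ1 hρ0 hρ1 f (abs_le_sum_abs' f) t)
  have hsumw : Summable w :=
    summable_geom_bdd hγ0 hγ1
      (fun t => pdist_bound hP0 hP1 hμ0 hμ1 hρ0 hρ1 V (abs_le_sum_abs' V) t)
  have hpoint : ∀ t, γ ^ t * ∑ s, pDist P μ ρ t s * ∑ a, ρ s a * Adv P γ R V s a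
      = γ ^ t * ∑ s, pDist P μ ρ t s * f s + (w (t + 1) - w t) := by
    intro t
    have h1 : ∀ s, ∑ a, ρ s a * Adv P γ R V s a
        = (∑ a, ρ s a * R s a) + γ * (∑ a, ρ s a * ∑ s', P s a s' * V s') - V s := by
      intro s; simp only [Adv]; exact sum_mul_adv hρ1 R V s
    have h2 : ∀ s, pDist P μ ρ t s *
        ((∑ a, ρ s a * R s a) + γ * (∑ a, ρ s a * ∑ s', P s a s' * V s') - V s)
        = pDist P μ ρ t s * (∑ a, ρ s a * R s a)
          + γ * (pDist P μ ρ t s * ∑ a, ρ s a * ∑ s', P s a s' * V s')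
          - pDist P μ ρ t s * V s := fun s => by ring
    simp_rw [h1, h2, Finset.sum_sub_distrib, Finset.sum_add_distrib, ← Finset.mul_sum]
    rw [mid_eq t V]
    simp only [hwdef, hf]
    ring
  calc ∑' t : ℕ, γ ^ t * ∑ s, pDist P μ ρ t s * ∑ a, ρ s a * Adv P γ R V s a
      = ∑' t : ℕ, (γ ^ t * ∑ s, pDist P μ ρ t s * f s + (w (t + 1) - w t)) :=
        tsum_congr hpoint
    _ = (∑' t : ℕ, γ ^ t * ∑ s, pDist P μ ρ t s * f s) + ∑' t : ℕ, (w (t + 1) - w t) :=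
        Summable.tsum_add hsumr (((summable_nat_add_iff 1).2 hsumw).sub hsumw)
    _ = Jret P μ γ R ρ - ∑ s, μ s * V s := by
        rw [tsum_shift_sub w hsumw]
        have hJ : Jret P μ γ R ρ = ∑' t : ℕ, γ ^ t * ∑ s, pDist P μ ρ t s * f s := by
          unfold Jret
          refine tsum_congr fun t => ?_
          congr 1
          refine Finset.sum_congr rfl fun s _ => ?_
          rw [hf, Finset.mul_sum]
          exact Finset.sum_congr rfl fun a _ => by ring
        have hw0 : w 0 = ∑ s, μ s * V s := by
          simp only [hwdef, pow_zero, one_mul]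
          rfl
        rw [hJ, hw0]
        ring

lemma dvisit_exchange {P : S → A → S → ℝ} (hP0 : ∀ s a s', 0 ≤ P s a s')
    (hP1 : ∀ s a, ∑ s', P s a s' = 1)
    {γ : ℝ} (hγ0 : 0 ≤ γ) (hγ1 : γ < 1)
    {μ : S → ℝ} (hμ0 : ∀ s, 0 ≤ μ s) (hμ1 : ∑ s, μ s = 1)
    {ρ : S → A → ℝ} (hρ0 : ∀ s a, 0 ≤ ρ s a) (hρ1 : ∀ s, ∑ a, ρ s a = 1)
    (g : S → ℝ) :
    (1 - γ)⁻¹ * ∑ s, dvisit P μ γ ρ s * g s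
      = ∑' t : ℕ, γ ^ t * ∑ s, pDist P μ ρ t s * g s := by
  have hγne : (1 : ℝ) - γ ≠ 0 := sub_ne_zero.mpr (by linarith)
  have hsum : ∀ s, Summable (fun t => γ ^ t * (pDist P μ ρ t s * g s)) := by
    intro s
    refine summable_geom_bdd hγ0 hγ1 (M := |g s|) (fun t => ?_)
    rw [abs_mul, abs_of_nonneg (pdist_nonneg hP0 hμ0 hρ0 t s)]
    have h1 : pDist P μ ρ t s ≤ 1 := by
      calc pDist P μ ρ t s ≤ ∑ s', pDist P μ ρ t s' :=
            Finset.single_le_sum (fun s' _ => pdist_nonneg hP0 hμ0 hρ0 t s')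
              (Finset.mem_univ s)
        _ = 1 := pdist_sum hP1 hμ1 hρ1 t
    exact mul_le_of_le_one_left (abs_nonneg _) h1
  have hs : ∀ s, dvisit P μ γ ρ s * g s
      = (1 - γ) * ∑' t : ℕ, γ ^ t * (pDist P μ ρ t s * g s) := by
    intro s
    unfold dvisit
    rw [mul_assoc, ← tsum_mul_right]
    congr 1
    exact tsum_congr fun t => by ring
  simp_rw [hs]
  rw [← Finset.mul_sum, ← Summable.tsum_finsetSum (fun s _ => hsum s),
    inv_mul_cancel_left₀ hγne]
  exact tsum_congr fun t => by rw [Finset.mul_sum]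

end aux2

/-- **Performance difference lemma for policy-dependent reward.** With
`C_π(s,a) = log(π(s,a)/π_b(s,a))`, for any two everywhere-positive policies `π, π̃`:
`J_{C_π}(π) − J_{C_{π̃}}(π̃) = (1−γ)⁻¹ ∑_s d^π(s) ∑_a π(s,a) A^{π̃}_{C_{π̃}}(s,a)
  + (1−γ)⁻¹ D^π_KL(π, π̃)`. -/
theorem stmt_9 {S A : Type*} [Fintype S] [Fintype A] [Nonempty S] [Nonempty A]
    (P : S → A → S → ℝ)
    (hP0 : ∀ s a s', 0 ≤ P s a s') (hP1 : ∀ s a, ∑ s', P s a s' = 1)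
    (γ : ℝ) (hγ0 : 0 < γ) (hγ1 : γ < 1)
    (μ : S → ℝ) (hμ0 : ∀ s, 0 ≤ μ s) (hμ1 : ∑ s, μ s = 1)
    (πb : S → A → ℝ) (hπb0 : ∀ s a, 0 < πb s a) (hπb1 : ∀ s, ∑ a, πb s a = 1)
    (π πt : S → A → ℝ)
    (hπ0 : ∀ s a, 0 < π s a) (hπ1 : ∀ s, ∑ a, π s a = 1)
    (hπt0 : ∀ s a, 0 < πt s a) (hπt1 : ∀ s, ∑ a, πt s a = 1)
    (Vt : S → ℝ)
    (hVt : ∀ s, Vt s = ∑ a, πt s a *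
      (Real.log (πt s a / πb s a) + γ * ∑ s', P s a s' * Vt s')) :
    Jret P μ γ (fun s a => Real.log (π s a / πb s a)) π -
        Jret P μ γ (fun s a => Real.log (πt s a / πb s a)) πt =
      (1 - γ)⁻¹ * ∑ s, dvisit P μ γ π s *
          ∑ a, π s a * Adv P γ (fun s a => Real.log (πt s a / πb s a)) Vt s a +
        (1 - γ)⁻¹ * ∑ s, dvisit P μ γ π s * KL (π s) (πt s) := by
  set C : S → A → ℝ := fun s a => Real.log (π s a / πb s a) with hC
  set Ct : S → A → ℝ := fun s a => Real.log (πt s a / πb s a) with hCt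
  have hγ0' : (0:ℝ) ≤ γ := le_of_lt hγ0
  have hπ0' : ∀ s a, 0 ≤ π s a := fun s a => (hπ0 s a).le
  have hπt0' : ∀ s a, 0 ≤ πt s a := fun s a => (hπt0 s a).le
  -- step 1: Jret Ct πt = ∑ μ Vt
  have hz : ∀ s, ∑ a, πt s a * Adv P γ Ct Vt s a = 0 := by
    intro s
    have h1 : ∑ a, πt s a * Adv P γ Ct Vt s a
        = (∑ a, πt s a * Ct s a) + γ * (∑ a, πt s a * ∑ s', P s a s' * Vt s') - Vt s := by
      simp only [Adv]; exact sum_mul_adv (hπt1) Ct Vt s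
    have h2 : Vt s = (∑ a, πt s a * Ct s a) + γ * (∑ a, πt s a * ∑ s', P s a s' * Vt s') := by
      rw [hVt s]
      have h3 : ∀ a, πt s a * (Ct s a + γ * ∑ s', P s a s' * Vt s')
          = πt s a * Ct s a + γ * (πt s a * ∑ s', P s a s' * Vt s') := fun a => by ring
      exact (Finset.sum_congr rfl fun a _ => h3 a).trans (by rw [Finset.sum_add_distrib, Finset.mul_sum])
    rw [h1, ← h2, sub_self]
  have e1 : Jret P μ γ Ct πt = ∑ s, μ s * Vt s := by
    have h := adv_tsum hP0 hP1 hγ0' hγ1 hμ0 hμ1 hπt0' hπt1 Ct Vt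
    simp only [hz, mul_zero, Finset.sum_const_zero, tsum_zero] at h
    linarith
  -- step 2: classic PDL for reward Ct
  have e2 := adv_tsum hP0 hP1 hγ0' hγ1 hμ0 hμ1 hπ0' hπ1 Ct Vt
  have e3 := dvisit_exchange hP0 hP1 hγ0' hγ1 hμ0 hμ1 hπ0' hπ1
    (fun s => ∑ a, π s a * Adv P γ Ct Vt s a)
  rw [e2] at e3
  -- step 3: KL part
  have hrew : ∀ (R : S → A → ℝ) (t : ℕ),
      ∑ s, ∑ a, pDist P μ π t s * π s a * R s a
        = ∑ s, pDist P μ π t s * ∑ a, π s a * R s a := by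
    intro R t
    refine Finset.sum_congr rfl fun s _ => ?_
    rw [Finset.mul_sum]
    exact Finset.sum_congr rfl fun a _ => by ring
  have hsummJ : ∀ (R : S → A → ℝ),
      Summable (fun t => γ ^ t * ∑ s, ∑ a, pDist P μ π t s * π s a * R s a) := by
    intro R
    simp_rw [hrew R]
    exact summable_geom_bdd hγ0' hγ1
      (fun t => pdist_bound hP0 hP1 hμ0 hμ1 hπ0' hπ1 _
        (abs_le_sum_abs' fun s => ∑ a, π s a * R s a) t)
  have hlog : ∀ s a, C s a - Ct s a = Real.log (π s a / πt s a) := by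
    intro s a
    show Real.log (π s a / πb s a) - Real.log (πt s a / πb s a) = _
    rw [Real.log_div (hπ0 s a).ne' (hπb0 s a).ne', Real.log_div (hπt0 s a).ne' (hπb0 s a).ne',
      Real.log_div (hπ0 s a).ne' (hπt0 s a).ne']
    ring
  have e4 : Jret P μ γ C π - Jret P μ γ Ct π
      = (1 - γ)⁻¹ * ∑ s, dvisit P μ γ π s * KL (π s) (πt s) := by
    rw [dvisit_exchange hP0 hP1 hγ0' hγ1 hμ0 hμ1 hπ0' hπ1 (fun s => KL (π s) (πt s))]
    unfold Jret
    rw [← Summable.tsum_sub (hsummJ C) (hsummJ Ct)]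
    refine tsum_congr fun t => ?_
    rw [← mul_sub, ← Finset.sum_sub_distrib]
    congr 1
    refine Finset.sum_congr rfl fun s _ => ?_
    rw [← Finset.sum_sub_distrib]
    simp only [KL]
    rw [Finset.mul_sum]
    refine Finset.sum_congr rfl fun a _ => ?_
    rw [← hlog s a]
    ring
  linarith
end

section
/- Let π_b be a behavior policy of the fixed finite discounted MDP with π_b(s,a) > 0 for all (s,a). For any policy π with π(s,a) > 0 for all (s,a), the discounted return of π under its own policy-dependent reward satisfies J_{C_π}(π) = (1−γ)^{-1} D^π_KL(π, π_b). -/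
open Finset

/-- For an everywhere-positive behavior policy `π_b` and everywhere-positive policy `π`,
the return of `π` under its own policy-dependent reward `C_π(s,a) = log(π(s,a)/π_b(s,a))`
satisfies `J_{C_π}(π) = (1−γ)⁻¹ D^π_KL(π, π_b)`. -/
theorem stmt_10 {S A : Type*} [Fintype S] [Fintype A] [Nonempty S] [Nonempty A]
    (P : S → A → S → ℝ)
    (hP0 : ∀ s a s', 0 ≤ P s a s') (hP1 : ∀ s a, ∑ s', P s a s' = 1)
    (γ : ℝ) (hγ0 : 0 < γ) (hγ1 : γ < 1)
    (μ : S → ℝ) (hμ0 : ∀ s, 0 ≤ μ s) (hμ1 : ∑ s, μ s = 1)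
    (πb : S → A → ℝ) (hπb0 : ∀ s a, 0 < πb s a) (hπb1 : ∀ s, ∑ a, πb s a = 1)
    (π : S → A → ℝ) (hπ0 : ∀ s a, 0 < π s a) (hπ1 : ∀ s, ∑ a, π s a = 1) :
    Jret P μ γ (fun s a => Real.log (π s a / πb s a)) π =
      (1 - γ)⁻¹ * ∑ s, dvisit P μ γ π s * KL (π s) (πb s) := by
  set K : S → ℝ := fun s => KL (π s) (πb s) with hK
  have hpd : ∀ t, (∀ s, 0 ≤ pDist P μ π t s) ∧ (∑ s, pDist P μ π t s = 1) := by
    intro t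
    induction t with
    | zero => exact ⟨hμ0, hμ1⟩
    | succ t ih =>
      refine ⟨fun s' => Finset.sum_nonneg fun s _ => Finset.sum_nonneg fun a _ =>
        mul_nonneg (mul_nonneg (ih.1 s) (hπ0 s a).le) (hP0 s a s'), ?_⟩
      show ∑ s', ∑ s, ∑ a, pDist P μ π t s * π s a * P s a s' = 1
      rw [Finset.sum_comm]
      have h1 : ∀ s, ∑ s', ∑ a, pDist P μ π t s * π s a * P s a s'
          = pDist P μ π t s := by
        intro s
        rw [Finset.sum_comm]
        have h2 : ∀ a, ∑ s', pDist P μ π t s * π s a * P s a s'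
            = pDist P μ π t s * π s a := by
          intro a; rw [← Finset.mul_sum, hP1, mul_one]
        simp only [h2, ← Finset.mul_sum, hπ1, mul_one]
      simp only [h1, ih.2]
  have hble : ∀ t s, pDist P μ π t s ≤ 1 := by
    intro t s
    calc pDist P μ π t s ≤ ∑ s', pDist P μ π t s' :=
          Finset.single_le_sum (fun s' _ => (hpd t).1 s') (Finset.mem_univ s)
      _ = 1 := (hpd t).2
  have hsum : ∀ s, Summable fun t : ℕ => γ ^ t * pDist P μ π t s := by
    intro s
    refine Summable.of_nonneg_of_le
      (fun t => mul_nonneg (pow_nonneg hγ0.le t) ((hpd t).1 s))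
      (fun t => ?_) (summable_geometric_of_lt_one hγ0.le hγ1)
    calc γ ^ t * pDist P μ π t s ≤ γ ^ t * 1 :=
          mul_le_mul_of_nonneg_left (hble t s) (pow_nonneg hγ0.le t)
      _ = γ ^ t := mul_one _
  have hinner : ∀ t, (∑ s, ∑ a, pDist P μ π t s * π s a *
      Real.log (π s a / πb s a)) = ∑ s, pDist P μ π t s * K s := by
    intro t
    refine Finset.sum_congr rfl fun s _ => ?_
    simp only [hK, KL, Finset.mul_sum, mul_assoc]
  have hJ : Jret P μ γ (fun s a => Real.log (π s a / πb s a)) π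
      = ∑ s, (∑' t : ℕ, γ ^ t * pDist P μ π t s) * K s := by
    unfold Jret
    simp only [hinner, Finset.mul_sum, ← mul_assoc]
    rw [Summable.tsum_finsetSum (fun s _ => (hsum s).mul_right (K s))]
    exact Finset.sum_congr rfl fun s _ => tsum_mul_right
  rw [hJ]
  unfold dvisit
  simp only [mul_assoc, ← Finset.mul_sum]
  rw [inv_mul_cancel_left₀ (sub_ne_zero.mpr hγ1.ne')]
end
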